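/- Let B ≥ 0. There exists a constant C = C(B) < ∞ with the following property. Let Λ be a finite set containing two sites x and y, α : Λ → [−B, B] a field and λ ∈ ℝ, and let ⟨·⟩ denote expectation with respect to the measure on {0,1}^Λ proportional to exp(Σ_{z∈Λ} (α_z + λ) η_z), either unconditioned or conditioned on the total particle number. Then for every probability density f (f ≥ 0, ⟨f⟩ = 1), ⟨w_{xy} f⟩ ≤ C ⟨(∇_{xy} √f)²⟩^{1/2}. -/

import Mathlib

noncomputable section

/-- `η_x` as a real number, for a configuration given by its set of occupied sites. -/
def ind {ι : Type*} [DecidableEq ι] (S : Finset ι) (x : ι) : ℝ := if x ∈ S then 1 else 0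

/-- `T_{xy}η`: the configuration with the occupation numbers at `x` and `y` exchanged. -/
def exchV {ι : Type*} [DecidableEq ι] (x y : ι) (S : Finset ι) : Finset ι :=
  S.image (Equiv.swap x y)

/-- `∇_{xy} f (η) = f(T_{xy}η) - f(η)`. -/
def gradV {ι : Type*} [DecidableEq ι] (x y : ι) (f : Finset ι → ℝ) (S : Finset ι) : ℝ :=
  f (exchV x y S) - f S

/-- The jump rate `a_{xy}(η) = 1 + e^{-(α_y-α_x)(η_y-η_x)}`. -/
def rate {ι : Type*} [DecidableEq ι] (α : ι → ℝ) (x y : ι) (S : Finset ι) : ℝ :=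
  1 + Real.exp (-((α y - α x) * (ind S y - ind S x)))

/-- The current `w_{xy}(η) = a_{xy}(η)(η_y - η_x)`. -/
def curr {ι : Type*} [DecidableEq ι] (α : ι → ℝ) (x y : ι) (S : Finset ι) : ℝ :=
  rate α x y S * (ind S y - ind S x)

/-- Expectation with respect to the (unconditioned) measure on `{0,1}^Λ` proportional to
`exp(∑_{z ∈ Λ} (α_z + λ) η_z)`. -/
def gE {ι : Type*} [Fintype ι] [DecidableEq ι] (α : ι → ℝ) (lam : ℝ)
    (g : Finset ι → ℝ) : ℝ :=
  (∑ S : Finset ι, Real.exp (∑ z ∈ S, (α z + lam)) * g S) /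
    ∑ S : Finset ι, Real.exp (∑ z ∈ S, (α z + lam))

/-- Expectation with respect to that measure conditioned on total particle number `N`. -/
def cEN {ι : Type*} [Fintype ι] [DecidableEq ι] (α : ι → ℝ) (lam : ℝ) (N : ℕ)
    (g : Finset ι → ℝ) : ℝ :=
  (∑ S ∈ Finset.univ.powersetCard N, Real.exp (∑ z ∈ S, (α z + lam)) * g S) /
    ∑ S ∈ Finset.univ.powersetCard N, Real.exp (∑ z ∈ S, (α z + lam))

namespace StmtAux

variable {ι : Type} [DecidableEq ι]

def wt (α : ι → ℝ) (lam : ℝ) (S : Finset ι) : ℝ := Real.exp (∑ z ∈ S, (α z + lam))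

lemma mem_exchV {x y z : ι} {S : Finset ι} :
    z ∈ exchV x y S ↔ Equiv.swap x y z ∈ S := by
  constructor
  · intro h
    rcases Finset.mem_image.1 h with ⟨a, ha, rfl⟩
    simpa [Equiv.swap_apply_self] using ha
  · intro h
    exact Finset.mem_image.2 ⟨_, h, Equiv.swap_apply_self _ _ _⟩

lemma exchV_exchV (x y : ι) (S : Finset ι) : exchV x y (exchV x y S) = S := by
  ext z; simp [mem_exchV, Equiv.swap_apply_self]

lemma ind_exchV_x (x y : ι) (S : Finset ι) : ind (exchV x y S) x = ind S y := by
  simp [ind, mem_exchV, Equiv.swap_apply_left]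

lemma ind_exchV_y (x y : ι) (S : Finset ι) : ind (exchV x y S) y = ind S x := by
  simp [ind, mem_exchV, Equiv.swap_apply_right]

lemma sum_exchV (x y : ι) (S : Finset ι) (g : ι → ℝ) :
    ∑ z ∈ exchV x y S, g z = ∑ z ∈ S, g (Equiv.swap x y z) :=
  Finset.sum_image (fun a _ b _ h => (Equiv.swap x y).injective h)

lemma wt_exchV (α : ι → ℝ) (lam : ℝ) (x y : ι) (S : Finset ι) :
    wt α lam (exchV x y S) =
      wt α lam S * Real.exp ((α x - α y) * (ind S y - ind S x)) := by
  rw [wt, wt, ← Real.exp_add, sum_exchV]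
  congr 1
  by_cases hxy : x = y
  · subst hxy; simp [ind]
  · have key : ∀ z ∈ S, α (Equiv.swap x y z) + lam
        = (α z + lam) + ((α y - α x) * (if z = x then (1:ℝ) else 0)
            + (α x - α y) * (if z = y then (1:ℝ) else 0)) := by
      intro z hz
      rcases eq_or_ne z x with rfl | hzx
      · have : z ≠ y := hxy
        simp [Equiv.swap_apply_left, this]; ring
      · rcases eq_or_ne z y with rfl | hzy
        · simp [Equiv.swap_apply_right, hzx]; ring
        · simp [Equiv.swap_apply_of_ne_of_ne hzx hzy, hzx, hzy]
    rw [Finset.sum_congr rfl key]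
    simp only [mul_ite, mul_one, mul_zero, Finset.sum_add_distrib, Finset.sum_ite_eq', ind]
    split_ifs <;> ring

lemma wt_curr_exchV (α : ι → ℝ) (lam : ℝ) (x y : ι) (S : Finset ι) :
    wt α lam (exchV x y S) * curr α x y (exchV x y S)
      = -(wt α lam S * curr α x y S) := by
  rw [wt_exchV, curr, curr, rate, rate, ind_exchV_x, ind_exchV_y]
  set d := ind S y - ind S x with hd
  set W := wt α lam S with hW
  have h1 : ind S x - ind S y = -d := by rw [hd]; ring
  rw [h1, show -((α y - α x) * -d) = (α y - α x) * d by ring,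
    show -((α y - α x) * d) = (α x - α y) * d by ring]
  have E : Real.exp ((α x - α y) * d) * Real.exp ((α y - α x) * d) = 1 := by
    rw [← Real.exp_add, show (α x - α y) * d + (α y - α x) * d = 0 by ring, Real.exp_zero]
  set e1 := Real.exp ((α x - α y) * d)
  set e2 := Real.exp ((α y - α x) * d)
  linear_combination (-(W * d)) * E

lemma abs_prod_le {B a b d : ℝ} (ha : |a| ≤ B) (hb : |b| ≤ B) (hd : |d| ≤ 1) :
    |(a - b) * d| ≤ 2 * B := by
  rw [abs_mul]
  calc |a - b| * |d| ≤ (2*B) * 1 := by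
        apply mul_le_mul _ hd (abs_nonneg _) (by linarith [abs_nonneg a, (abs_le.1 ha).1])
        calc |a - b| ≤ |a| + |b| := abs_sub a b
          _ ≤ 2 * B := by linarith
    _ = 2 * B := mul_one _

lemma abs_ind_sub_le (x y : ι) (S : Finset ι) : |ind S y - ind S x| ≤ 1 := by
  unfold ind; split_ifs <;> norm_num

lemma curr_sq_le {B : ℝ} (α : ι → ℝ) (x y : ι) (S : Finset ι) (hα : ∀ z, |α z| ≤ B) :
    (curr α x y S)^2 ≤ (1 + Real.exp (2*B))^2 := by
  have hd := abs_ind_sub_le x y S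
  have harg : -((α y - α x) * (ind S y - ind S x)) ≤ 2*B := by
    have := abs_le.1 (abs_prod_le (hα y) (hα x) hd)
    linarith
  have hr1 : 0 ≤ rate α x y S := by
    unfold rate; positivity
  have hr2 : rate α x y S ≤ 1 + Real.exp (2*B) := by
    unfold rate
    have := Real.exp_le_exp.2 harg
    linarith
  have hd2 : (ind S y - ind S x)^2 ≤ 1 := by
    have := abs_le.1 hd; nlinarith
  unfold curr
  rw [mul_pow]
  calc rate α x y S ^2 * (ind S y - ind S x)^2 ≤ (1 + Real.exp (2*B))^2 * 1 := by
        apply mul_le_mul _ hd2 (sq_nonneg _) (by positivity)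
        nlinarith
    _ = (1 + Real.exp (2*B))^2 := mul_one _

lemma reflect (x y : ι) (𝒜 : Finset (Finset ι)) (h𝒜 : ∀ S ∈ 𝒜, exchV x y S ∈ 𝒜)
    (F : Finset ι → ℝ) : ∑ S ∈ 𝒜, F S = ∑ S ∈ 𝒜, F (exchV x y S) :=
  Finset.sum_nbij' (i := exchV x y) (j := exchV x y) h𝒜 h𝒜
    (fun S _ => exchV_exchV x y S) (fun S _ => exchV_exchV x y S)
    (fun S _ => by rw [exchV_exchV])

lemma key {ι : Type} [DecidableEq ι]
    (B : ℝ) (α : ι → ℝ) (lam : ℝ) (x y : ι) (hα : ∀ z, |α z| ≤ B)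
    (𝒜 : Finset (Finset ι)) (h𝒜 : ∀ S ∈ 𝒜, exchV x y S ∈ 𝒜)
    (f : Finset ι → ℝ) (hf : ∀ S, 0 ≤ f S)
    (hnorm : (∑ S ∈ 𝒜, wt α lam S * f S) / (∑ S ∈ 𝒜, wt α lam S) = 1) :
    (∑ S ∈ 𝒜, wt α lam S * (curr α x y S * f S)) / (∑ S ∈ 𝒜, wt α lam S)
      ≤ Real.sqrt (2 * (1 + Real.exp (2*B))^3) *
        Real.sqrt ((∑ S ∈ 𝒜, wt α lam S *
          (gradV x y (fun S' => Real.sqrt (f S')) S)^2) / (∑ S ∈ 𝒜, wt α lam S)) := by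
  set K := 1 + Real.exp (2*B) with hK
  have hK1 : 1 ≤ K := by have := (Real.exp_pos (2*B)).le; linarith
  have hwt : ∀ S : Finset ι, 0 < wt α lam S := fun S => Real.exp_pos _
  set Z := ∑ S ∈ 𝒜, wt α lam S with hZ
  have hZ0 : 0 ≤ Z := Finset.sum_nonneg fun S _ => (hwt S).le
  have hZne : Z ≠ 0 := by
    intro h; rw [h, div_zero] at hnorm; exact one_ne_zero hnorm.symm
  have hZpos : 0 < Z := lt_of_le_of_ne hZ0 (Ne.symm hZne)
  have hF : ∑ S ∈ 𝒜, wt α lam S * f S = Z :=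
    (div_eq_one_iff_eq hZne).1 hnorm
  set g := gradV x y (fun S' => Real.sqrt (f S')) with hg
  set A := ∑ S ∈ 𝒜, wt α lam S * (curr α x y S * f S) with hA
  set G := ∑ S ∈ 𝒜, wt α lam S * g S ^ 2 with hG
  have hG0 : 0 ≤ G := Finset.sum_nonneg fun S _ => mul_nonneg (hwt S).le (sq_nonneg _)
  -- reflection identity for A
  have hA2 : A = -∑ S ∈ 𝒜, wt α lam S * curr α x y S * f (exchV x y S) := by
    have h1 : A = ∑ S ∈ 𝒜, wt α lam S * curr α x y S * f S :=
      Finset.sum_congr rfl (fun S _ => by ring)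
    rw [h1, reflect x y 𝒜 h𝒜 (fun S => wt α lam S * curr α x y S * f S),
      ← Finset.sum_neg_distrib]
    refine Finset.sum_congr rfl fun S hS => ?_
    rw [wt_curr_exchV]
    ring
  have h2A : 2 * A = ∑ S ∈ 𝒜, wt α lam S * curr α x y S *
      (f S - f (exchV x y S)) := by
    have : ∑ S ∈ 𝒜, wt α lam S * curr α x y S * (f S - f (exchV x y S))
        = (∑ S ∈ 𝒜, wt α lam S * curr α x y S * f S)
          - ∑ S ∈ 𝒜, wt α lam S * curr α x y S * f (exchV x y S) := by
      rw [← Finset.sum_sub_distrib]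
      exact Finset.sum_congr rfl fun S _ => by ring
    rw [this, show (∑ S ∈ 𝒜, wt α lam S * curr α x y S * f S) = A from
      (Finset.sum_congr rfl (fun S _ => by ring)).trans hA.symm]
    rw [show (∑ S ∈ 𝒜, wt α lam S * curr α x y S * f (exchV x y S)) = -A by
      rw [hA2]; ring]
    ring
  -- pointwise factorization
  have hpt : ∀ S : Finset ι, f S - f (exchV x y S)
      = -g S * (Real.sqrt (f (exchV x y S)) + Real.sqrt (f S)) := by
    intro S
    have h1 := Real.sq_sqrt (hf S)
    have h2 := Real.sq_sqrt (hf (exchV x y S))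
    simp only [hg, gradV]
    linear_combination h2 - h1
  set u : Finset ι → ℝ := fun S => Real.sqrt (wt α lam S) *
    (curr α x y S * (Real.sqrt (f (exchV x y S)) + Real.sqrt (f S))) with hu
  set v : Finset ι → ℝ := fun S => Real.sqrt (wt α lam S) * (-g S) with hv
  have h2A' : 2 * A = ∑ S ∈ 𝒜, u S * v S := by
    rw [h2A]
    refine Finset.sum_congr rfl fun S _ => ?_
    have hw := Real.sq_sqrt (hwt S).le
    rw [hpt S]
    simp only [hu, hv]
    linear_combination (curr α x y S * g S *
      (Real.sqrt (f (exchV x y S)) + Real.sqrt (f S))) * hw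
  have CS := Real.sum_mul_le_sqrt_mul_sqrt 𝒜 u v
  -- bound ∑ u^2
  have hfT : ∑ S ∈ 𝒜, wt α lam S * f (exchV x y S) ≤ Real.exp (2*B) * Z := by
    rw [reflect x y 𝒜 h𝒜 (fun S => wt α lam S * f (exchV x y S))]
    have step : ∀ S ∈ 𝒜, wt α lam (exchV x y S) * f (exchV x y (exchV x y S))
        ≤ Real.exp (2*B) * (wt α lam S * f S) := by
      intro S _
      rw [exchV_exchV, wt_exchV]
      have harg : (α x - α y) * (ind S y - ind S x) ≤ 2*B := by
        have := abs_le.1 (abs_prod_le (hα x) (hα y) (abs_ind_sub_le x y S))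
        linarith
      have hWf : 0 ≤ wt α lam S * f S := mul_nonneg (hwt S).le (hf S)
      calc wt α lam S * Real.exp ((α x - α y) * (ind S y - ind S x)) * f S
          = Real.exp ((α x - α y) * (ind S y - ind S x)) * (wt α lam S * f S) := by ring
        _ ≤ Real.exp (2*B) * (wt α lam S * f S) :=
            mul_le_mul_of_nonneg_right (Real.exp_le_exp.2 harg) hWf
    calc ∑ S ∈ 𝒜, wt α lam (exchV x y S) * f (exchV x y (exchV x y S))
        ≤ ∑ S ∈ 𝒜, Real.exp (2*B) * (wt α lam S * f S) := Finset.sum_le_sum step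
      _ = Real.exp (2*B) * Z := by rw [← Finset.mul_sum, hF]
  have hterm : ∀ S ∈ 𝒜, u S ^ 2 ≤ K^2 *
      (2 * (wt α lam S * f (exchV x y S)) + 2 * (wt α lam S * f S)) := by
    intro S _
    have hc := curr_sq_le α x y S hα
    have hs1 := Real.sq_sqrt (hf S)
    have hs2 := Real.sq_sqrt (hf (exchV x y S))
    have hs3 := Real.sqrt_nonneg (f S)
    have hs4 := Real.sqrt_nonneg (f (exchV x y S))
    have hsum : (Real.sqrt (f (exchV x y S)) + Real.sqrt (f S))^2
        ≤ 2 * f (exchV x y S) + 2 * f S := by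
      nlinarith [sq_nonneg (Real.sqrt (f (exchV x y S)) - Real.sqrt (f S))]
    have hw := Real.sq_sqrt (hwt S).le
    have hueq : u S ^ 2 = wt α lam S * ((curr α x y S)^2 *
        (Real.sqrt (f (exchV x y S)) + Real.sqrt (f S))^2) := by
      simp only [hu]; rw [mul_pow, mul_pow, hw]
    rw [hueq]
    have h1 : (curr α x y S)^2 * (Real.sqrt (f (exchV x y S)) + Real.sqrt (f S))^2
        ≤ K^2 * (2 * f (exchV x y S) + 2 * f S) :=
      mul_le_mul hc hsum (sq_nonneg _) (by positivity)
    calc wt α lam S * ((curr α x y S)^2 *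
          (Real.sqrt (f (exchV x y S)) + Real.sqrt (f S))^2)
        ≤ wt α lam S * (K^2 * (2 * f (exchV x y S) + 2 * f S)) :=
          mul_le_mul_of_nonneg_left h1 (hwt S).le
      _ = K^2 * (2 * (wt α lam S * f (exchV x y S)) + 2 * (wt α lam S * f S)) := by ring
  have hU : ∑ S ∈ 𝒜, u S ^ 2 ≤ 2 * K^3 * Z := by
    calc ∑ S ∈ 𝒜, u S ^ 2
        ≤ ∑ S ∈ 𝒜, K^2 * (2 * (wt α lam S * f (exchV x y S)) + 2 * (wt α lam S * f S)) :=
          Finset.sum_le_sum hterm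
      _ = K^2 * (2 * (∑ S ∈ 𝒜, wt α lam S * f (exchV x y S)) + 2 * Z) := by
          rw [← Finset.mul_sum, Finset.sum_add_distrib, ← Finset.mul_sum, ← Finset.mul_sum, hF]
      _ ≤ K^2 * (2 * (Real.exp (2*B) * Z) + 2 * Z) := by
          have hK2 : (0:ℝ) ≤ K^2 := sq_nonneg _
          have : 2 * (∑ S ∈ 𝒜, wt α lam S * f (exchV x y S)) + 2 * Z
              ≤ 2 * (Real.exp (2*B) * Z) + 2 * Z := by linarith
          exact mul_le_mul_of_nonneg_left this hK2
      _ = 2 * K^3 * Z := by rw [hK]; ring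
  have hV : ∑ S ∈ 𝒜, v S ^ 2 = G := by
    refine Finset.sum_congr rfl fun S _ => ?_
    simp only [hv]
    rw [mul_pow, Real.sq_sqrt (hwt S).le]
    ring
  -- combine
  have hAle : A ≤ Real.sqrt (2 * K^3 * Z) * Real.sqrt G := by
    have h1 : 2 * A ≤ Real.sqrt (∑ S ∈ 𝒜, u S ^ 2) * Real.sqrt (∑ S ∈ 𝒜, v S ^ 2) := by
      rw [h2A']; exact CS
    have h2 : Real.sqrt (∑ S ∈ 𝒜, u S ^ 2) ≤ Real.sqrt (2 * K^3 * Z) :=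
      Real.sqrt_le_sqrt hU
    have h3 : Real.sqrt (∑ S ∈ 𝒜, v S ^ 2) = Real.sqrt G := by rw [hV]
    rw [h3] at h1
    have h4 : Real.sqrt (∑ S ∈ 𝒜, u S ^ 2) * Real.sqrt G
        ≤ Real.sqrt (2 * K^3 * Z) * Real.sqrt G :=
      mul_le_mul_of_nonneg_right h2 (Real.sqrt_nonneg _)
    have h5 : (0:ℝ) ≤ Real.sqrt (2 * K^3 * Z) * Real.sqrt G :=
      mul_nonneg (Real.sqrt_nonneg _) (Real.sqrt_nonneg _)
    linarith
  have hdiv : A / Z ≤ (Real.sqrt (2 * K^3 * Z) * Real.sqrt G) / Z := by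
    gcongr
  refine hdiv.trans_eq ?_
  have hsZ : Real.sqrt Z ≠ 0 := Real.sqrt_ne_zero'.2 hZpos
  have hmss := Real.mul_self_sqrt hZ0
  have hKpos : (0:ℝ) < K := lt_of_lt_of_le one_pos hK1
  have h2K3 : (0:ℝ) ≤ 2 * K^3 := by
    have := pow_pos hKpos 3; linarith
  rw [Real.sqrt_div hG0 Z, show 2 * K^3 * Z = (2 * K^3) * Z by ring,
    Real.sqrt_mul h2K3 Z]
  have hZsq : Real.sqrt Z ^ 2 = Z := Real.sq_sqrt hZ0
  field_simp
  linear_combination (Real.sqrt G) * hZsq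

end StmtAux

theorem stmt_15 (B : ℝ) (hB : 0 ≤ B) :
    ∃ C : ℝ, ∀ (ι : Type) [Fintype ι] [DecidableEq ι],
      ∀ (α : ι → ℝ) (lam : ℝ) (x y : ι), (∀ z : ι, |α z| ≤ B) →
      (∀ f : Finset ι → ℝ, (∀ S, 0 ≤ f S) → gE α lam f = 1 →
        gE α lam (fun S => curr α x y S * f S)
          ≤ C * Real.sqrt
              (gE α lam fun S => (gradV x y (fun S' => Real.sqrt (f S')) S) ^ 2)) ∧
      ∀ N : ℕ, ∀ f : Finset ι → ℝ, (∀ S, 0 ≤ f S) → cEN α lam N f = 1 →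
        cEN α lam N (fun S => curr α x y S * f S)
          ≤ C * Real.sqrt
              (cEN α lam N fun S => (gradV x y (fun S' => Real.sqrt (f S')) S) ^ 2) := by
  refine ⟨Real.sqrt (2 * (1 + Real.exp (2*B))^3), ?_⟩
  intro ι _ _ α lam x y hα
  constructor
  · intro f hf hnorm
    exact StmtAux.key B α lam x y hα Finset.univ (fun S _ => Finset.mem_univ _) f hf hnorm
  · intro N f hf hnorm
    refine StmtAux.key B α lam x y hα (Finset.univ.powersetCard N) ?_ f hf hnorm
    intro S hS
    rw [Finset.mem_powersetCard_univ] at hS ⊢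
    rw [exchV, Finset.card_image_of_injective _ (Equiv.swap x y).injective]
    exact hS
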